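/- The sentence [Pub ◇⊤]* ◇□⊥ of public-announcement logic with action iteration is satisfiable but has no finite model: it holds at a state s of S iff for every n, s survives n applications of the operation deleting all end states and, in the n-th derived model, s has a successor that is an end state; any model containing such a state is infinite. -/
import Mathlib


/-- The n-fold derivative of a single-agent Kripke frame: `Deriv r (n+1)` is the
set of states of `Deriv r n` having at least one successor inside `Deriv r n`
(i.e. the result of `n+1` public announcements of ◇⊤, each deleting the end
states). -/
def Deriv {W : Type} (r : W → W → Prop) : ℕ → Set W
  | 0 => Set.univ
  | n + 1 => {s | s ∈ Deriv r n ∧ ∃ t, t ∈ Deriv r n ∧ r s t}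

/-- Truth of the sentence `[Pub ◇⊤]* ◇□⊥` at `s`: for every `n`, `s` survives
`n` announcements and, in the n-th derived model, `s` has a successor that is
an end state there. -/
def SatPubIter {W : Type} (r : W → W → Prop) (s : W) : Prop :=
  ∀ n, s ∈ Deriv r n ∧
    ∃ t, t ∈ Deriv r n ∧ r s t ∧ ∀ u, u ∈ Deriv r n → ¬ r t u

lemma Deriv_anti {W : Type} (r : W → W → Prop) {n m : ℕ} (h : n ≤ m) :
    Deriv r m ⊆ Deriv r n := by
  induction h with
  | refl => exact subset_rfl
  | step _ ih => exact fun x hx => ih hx.1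

/-- The witness relation on ℕ: 0 sees every positive number, and positive
numbers see smaller positive numbers. -/
def exR : ℕ → ℕ → Prop := fun a b => (a = 0 ∧ 1 ≤ b) ∨ (1 ≤ a ∧ 1 ≤ b ∧ b < a)

lemma Deriv_exR (n : ℕ) : Deriv exR n = {m | m = 0 ∨ n + 1 ≤ m} := by
  induction n with
  | zero =>
    ext m
    simp only [Deriv, Set.mem_univ, Set.mem_setOf_eq, true_iff]
    omega
  | succ n ih =>
    ext m
    simp only [Deriv, ih, Set.mem_setOf_eq, exR]
    constructor
    · rintro ⟨hm, t, ht, hrt⟩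
      omega
    · rintro (rfl | hm)
      · exact ⟨Or.inl rfl, n + 1, Or.inr le_rfl, Or.inl ⟨rfl, by omega⟩⟩
      · exact ⟨Or.inr (by omega), n + 1, Or.inr le_rfl, Or.inr ⟨by omega, by omega, by omega⟩⟩

/-- `[Pub ◇⊤]* ◇□⊥` is satisfiable, but not in any finite model. -/
theorem pub_iter_satisfiable_but_no_finite_model :
    (∃ (W : Type) (r : W → W → Prop) (s : W), SatPubIter r s) ∧
    (∀ (W : Type) (r : W → W → Prop) (s : W), Finite W → ¬ SatPubIter r s) := by
  constructor
  · refine ⟨ℕ, exR, 0, fun n => ?_⟩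
    rw [Deriv_exR]
    refine ⟨Or.inl rfl, n + 1, Or.inr le_rfl, Or.inl ⟨rfl, by omega⟩, ?_⟩
    rintro u hu (⟨h0, _⟩ | ⟨_, hu1, hlt⟩)
    · omega
    · rcases hu with h | h <;> omega
  · intro W r s _ hs
    choose t ht hrt hend using fun n => (hs n).2
    have key : ∀ {n m : ℕ}, n < m → t n ≠ t m := by
      intro n m hnm heq
      have : t m ∈ Deriv r (n + 1) := Deriv_anti r hnm (ht m)
      obtain ⟨_, u, hu, hru⟩ := this
      exact hend n u hu (heq ▸ hru)
    obtain ⟨x, y, hxy, heq⟩ := Finite.exists_ne_map_eq_of_infinite t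
    rcases lt_or_gt_of_ne hxy with h | h
    · exact key h heq
    · exact key h heq.symm
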